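/- Assume f satisfies hypotheses (H1)–(H3) with b = 1 and a ∈ [−3/2, 0), and let x be a solution of x'(t) = f(t,x_t) with m = liminf_{t→∞} x(t) < 0 < M = limsup_{t→∞} x(t), where r(x) = ax/(1+x). Then M ≤ r(m). Moreover, if a ∈ [−3/2, −5/4], then M < R(m), where R(x) = (A'(0))² x/(A'(0) − (A''(0)/2)x) with A'(0) = a + 1/2 and A''(0) = −(2a + 1/3). -/

import Mathlib

open Set Filter MeasureTheory Topology

/-- The Yorke functional 𝓜(φ) = max{0, max_{s ∈ [-1,0]} φ(s)}. -/
noncomputable def yorkeM (φ : ℝ → ℝ) : ℝ := max 0 (sSup (φ '' Icc (-1 : ℝ) 0))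

/-- Membership in the phase space C = C([-1,0], ℝ): we work with functions
ℝ → ℝ whose restriction to [-1,0] is continuous (only values on [-1,0] matter). -/
def InC (φ : ℝ → ℝ) : Prop := ContinuousOn φ (Icc (-1 : ℝ) 0)

/-- The segment x_t(s) = x(t+s), s ∈ [-1,0]. -/
def seg (x : ℝ → ℝ) (t : ℝ) : ℝ → ℝ := fun s => x (t + s)

/-- Carathéodory condition: measurable in t for fixed φ, continuous in φ
(w.r.t. uniform distance on [-1,0]) for fixed t, locally dominated by an
integrable function. -/
def Caratheodory (f : ℝ → (ℝ → ℝ) → ℝ) : Prop :=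
  (∀ φ, InC φ → Measurable fun t => f t φ) ∧
  (∀ t : ℝ, ∀ φ, InC φ → ∀ ε : ℝ, 0 < ε → ∃ δ : ℝ, 0 < δ ∧ ∀ ψ, InC ψ →
      (∀ s ∈ Icc (-1 : ℝ) 0, |ψ s - φ s| ≤ δ) → |f t ψ - f t φ| ≤ ε) ∧
  (∀ t : ℝ, ∀ φ, InC φ → ∃ δ : ℝ, 0 < δ ∧ ∃ m : ℝ → ℝ,
      IntegrableOn m (Icc (t - δ) (t + δ)) ∧
      ∀ s ∈ Icc (t - δ) (t + δ), ∀ ψ, InC ψ →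
        (∀ u ∈ Icc (-1 : ℝ) 0, |ψ u - φ u| ≤ δ) → |f s ψ| ≤ m s)

/-- (H1): f is Carathéodory and for every q there is ϑ(q) ≥ 0 dominating f(t,φ)
a.e. in t whenever φ ≥ q on [-1,0]. -/
def HypH1 (f : ℝ → (ℝ → ℝ) → ℝ) (θ : ℝ → ℝ) : Prop :=
  Caratheodory f ∧
  ∀ q : ℝ, 0 ≤ θ q ∧
    ∀ φ, InC φ → (∀ s ∈ Icc (-1 : ℝ) 0, q ≤ φ s) →
      ∀ᵐ t : ℝ ∂volume, f t φ ≤ θ q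

/-- (H2), the generalized Yorke condition with r(x) = ax/(1+bx):
r(𝓜(φ)) ≤ f(t,φ) for all φ, and f(t,φ) ≤ r(-𝓜(-φ)) for all φ with
min φ > -1/b (which is automatic when b = 0, since then b·φ(s) > -1 always). -/
def HypH2 (f : ℝ → (ℝ → ℝ) → ℝ) (a b : ℝ) : Prop :=
  (∀ t : ℝ, ∀ φ, InC φ → a * yorkeM φ / (1 + b * yorkeM φ) ≤ f t φ) ∧
  (∀ t : ℝ, ∀ φ, InC φ → (∀ s ∈ Icc (-1 : ℝ) 0, -1 < b * φ s) →
      f t φ ≤ a * (-yorkeM fun s => -φ s) / (1 + b * (-yorkeM fun s => -φ s)))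

/-- (H3): ∫₀^∞ f(s, p_s) ds diverges for every continuous p having a nonzero
limit at infinity. -/
def HypH3 (f : ℝ → (ℝ → ℝ) → ℝ) : Prop :=
  ∀ p : ℝ → ℝ, ContinuousOn p (Ici (-1 : ℝ)) → ∀ L : ℝ, L ≠ 0 →
    Tendsto p atTop (𝓝 L) →
    ¬∃ I : ℝ, Tendsto (fun T => ∫ s in (0 : ℝ)..T, f s (seg p s)) atTop (𝓝 I)

/-- A solution of x'(t) = f(t, x_t) on [α-1, ω) (with ω ∈ (α, +∞]) with initial
time α: continuous on [α-1, ω) and satisfying the equivalent integral equation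
(absolute continuity plus a.e. differential equation) on [α, ω). -/
def IsSolOn (f : ℝ → (ℝ → ℝ) → ℝ) (α : ℝ) (ω : EReal) (x : ℝ → ℝ) : Prop :=
  (α : EReal) < ω ∧
  ContinuousOn x {t : ℝ | α - 1 ≤ t ∧ (t : EReal) < ω} ∧
  ∀ t : ℝ, α ≤ t → (t : EReal) < ω →
    IntervalIntegrable (fun s => f s (seg x s)) volume α t ∧
    x t = x α + ∫ s in α..t, f s (seg x s)

/-- A solution on its maximal interval of existence [α-1, ω): it admits no
extension to any strictly larger interval [α-1, ω'). -/
def IsMaximalSolOn (f : ℝ → (ℝ → ℝ) → ℝ) (α : ℝ) (ω : EReal) (x : ℝ → ℝ) : Prop :=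
  IsSolOn f α ω x ∧
  ∀ ω' : EReal, ω < ω' → ∀ y : ℝ → ℝ, IsSolOn f α ω' y →
    ¬∀ t : ℝ, α - 1 ≤ t → (t : EReal) < ω → y t = x t

/-- A (global) solution of x'(t) = f(t, x_t) on [α-1, +∞). -/
def IsGlobalSol (f : ℝ → (ℝ → ℝ) → ℝ) (α : ℝ) (x : ℝ → ℝ) : Prop :=
  ContinuousOn x (Ici (α - 1)) ∧
  ∀ t : ℝ, α ≤ t →
    IntervalIntegrable (fun s => f s (seg x s)) volume α t ∧
    x t = x α + ∫ s in α..t, f s (seg x s)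

lemma seg_InC {x : ℝ → ℝ} {α u : ℝ} (hx : ContinuousOn x (Ici (α-1))) (hu : α ≤ u) :
    InC (seg x u) := by
  have : ContinuousOn (x ∘ (fun s => u + s)) (Icc (-1:ℝ) 0) := by
    apply hx.comp (by fun_prop)
    intro s hs
    simp only [mem_Ici]
    have := hs.1
    linarith [hs.1]
  exact this

lemma yorkeM_nonneg (φ : ℝ → ℝ) : 0 ≤ yorkeM φ := le_max_left _ _

lemma yorkeM_le {x : ℝ → ℝ} {u B : ℝ} (hB : 0 ≤ B) (h : ∀ s ∈ Icc (u-1) u, x s ≤ B) :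
    yorkeM (seg x u) ≤ B := by
  apply max_le hB
  apply csSup_le
  · exact (Set.nonempty_Icc.2 (by norm_num : (-1:ℝ) ≤ 0)).image _
  · rintro y ⟨s, hs, rfl⟩
    exact h (u + s) ⟨by linarith [hs.1], by linarith [hs.2]⟩

lemma yorkeM_neg_le {x : ℝ → ℝ} {u c : ℝ} (hc : c ≤ 0) (h : ∀ s ∈ Icc (u-1) u, c ≤ x s) :
    c ≤ -yorkeM (fun s => -(seg x u) s) := by
  have : yorkeM (fun s => -(seg x u) s) ≤ -c := by
    apply max_le (by linarith)
    apply csSup_le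
    · exact (Set.nonempty_Icc.2 (by norm_num : (-1:ℝ) ≤ 0)).image _
    · rintro y ⟨s, hs, rfl⟩
      have := h (u + s) ⟨by linarith [hs.1], by linarith [hs.2]⟩
      simp only [seg]
      linarith
  linarith

lemma sol_diff {f : ℝ → (ℝ → ℝ) → ℝ} {α : ℝ} {x : ℝ → ℝ} (hx : IsGlobalSol f α x)
    {s t : ℝ} (hs : α ≤ s) (hst : s ≤ t) :
    IntervalIntegrable (fun u => f u (seg x u)) volume s t ∧
    x t = x s + ∫ u in s..t, f u (seg x u) := by
  have ht : α ≤ t := le_trans hs hst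
  obtain ⟨hIs, hes⟩ := hx.2 s hs
  obtain ⟨hIt, het⟩ := hx.2 t ht
  have hI : IntervalIntegrable (fun u => f u (seg x u)) volume s t := by
    apply hIt.mono_set
    rw [uIcc_of_le hst, uIcc_of_le ht]
    exact Icc_subset_Icc hs le_rfl
  refine ⟨hI, ?_⟩
  have hadd := intervalIntegral.integral_add_adjacent_intervals hIs hI
  rw [het, hes]
  linarith

/-- r is decreasing on (-1, ∞) for a < 0. -/
lemma r_anti {a p q : ℝ} (ha : a < 0) (hp : -1 < p) (hpq : p ≤ q) :
    a * q / (1 + q) ≤ a * p / (1 + p) := by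
  have hp' : (0:ℝ) < 1 + p := by linarith
  have hq' : (0:ℝ) < 1 + q := by linarith
  rw [div_le_div_iff₀ hq' hp']
  nlinarith

lemma log_ge_pade {K : ℝ} (hK : 0 ≤ K) : 2*K/(2+K) ≤ Real.log (1+K) := by
  have h2K : (0:ℝ) < 2 + K := by linarith
  rw [div_le_iff₀ h2K]
  -- φ(t) = (2+t) log(1+t) - 2t is monotone on [0, ∞)
  set φ : ℝ → ℝ := fun t => (2+t) * Real.log (1+t) - 2*t with hφ
  have hderiv : ∀ t : ℝ, 0 < 1 + t →
      HasDerivAt φ (Real.log (1+t) + (2+t) * (1/(1+t)) - 2) t := by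
    intro t ht
    have h1 : HasDerivAt (fun s : ℝ => 1 + s) 1 t := (hasDerivAt_id t).const_add 1
    have hlog : HasDerivAt (fun s : ℝ => Real.log (1+s)) ((1+t)⁻¹ * 1) t :=
      (Real.hasDerivAt_log ht.ne').comp t h1
    have h2 : HasDerivAt (fun s : ℝ => 2 + s) 1 t := (hasDerivAt_id t).const_add 2
    have hmul := h2.mul hlog
    have hfin := hmul.sub ((hasDerivAt_id t).const_mul 2)
    have hfun : φ = ((fun s : ℝ => 2 + s) * fun s => Real.log (1 + s)) - fun y => 2 * id y := by
      funext y; simp [hφ]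
    rw [hfun]
    exact hfin.congr_deriv (by ring)
  have hmono : MonotoneOn φ (Ici (0:ℝ)) := by
    apply monotoneOn_of_deriv_nonneg (convex_Ici 0)
    · apply ContinuousOn.sub
      · apply ContinuousOn.mul (by fun_prop)
        apply ContinuousOn.log (by fun_prop)
        intro t ht
        simp only [mem_Ici] at ht
        positivity
      · fun_prop
    · intro t ht
      rw [interior_Ici] at ht
      exact ((hderiv t (by simp only [mem_Ioi] at ht; linarith)).differentiableAt).differentiableWithinAt
    · intro t ht
      rw [interior_Ici] at ht
      simp only [mem_Ioi] at ht
      have h1t : (0:ℝ) < 1 + t := by linarith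
      rw [(hderiv t h1t).deriv]
      -- log(1+t) ≥ 1 - 1/(1+t)
      have hl : Real.log (1/(1+t)) ≤ 1/(1+t) - 1 := Real.log_le_sub_one_of_pos (by positivity)
      rw [one_div, Real.log_inv] at hl
      have hrw : (2+t) * (1/(1+t)) = 1 + (1+t)⁻¹ := by field_simp; ring
      rw [hrw]
      linarith
  have h0 : φ 0 = 0 := by simp [hφ]
  have := hmono (self_mem_Ici) (mem_Ici.2 hK) hK
  rw [h0] at this
  simp only [hφ] at this
  linarith

lemma integral_r_affine {a K : ℝ} (hK : 0 < K) :
    ∫ v in (0:ℝ)..1, a * (K*(1-v)) / (1 + K*(1-v)) = a * (1 - Real.log (1+K)/K) := by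
  have hpos : ∀ v ∈ uIcc (0:ℝ) 1, 0 < 1 + K*(1-v) := by
    intro v hv
    rw [uIcc_of_le (by norm_num : (0:ℝ) ≤ 1)] at hv
    nlinarith [hv.1, hv.2]
  have hFTC := intervalIntegral.integral_eq_sub_of_hasDerivAt
    (f := fun v => a*v + (a/K) * Real.log (1 + K*(1-v)))
    (f' := fun v => a * (K*(1-v)) / (1 + K*(1-v)))
    (a := (0:ℝ)) (b := 1) ?_ ?_
  · rw [hFTC]
    norm_num
    field_simp
  · intro v hv
    have h1 : HasDerivAt (fun s : ℝ => 1 - s) (-1) v := (hasDerivAt_id v).const_sub 1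
    have h2 : HasDerivAt (fun s : ℝ => K * (1 - s)) (K * (-1)) v := h1.const_mul K
    have h3 : HasDerivAt (fun s : ℝ => 1 + K * (1 - s)) (K * (-1)) v := h2.const_add 1
    have h4 : HasDerivAt (fun s : ℝ => Real.log (1 + K * (1 - s)))
        ((1 + K*(1-v))⁻¹ * (K * (-1))) v := by
        have := (Real.hasDerivAt_log (hpos v hv).ne').comp v h3; exact this
    have h5 := ((hasDerivAt_id v).const_mul a).add (h4.const_mul (a/K))
    convert h5 using 1
    · funext y; simp only [Pi.add_apply, id]
    have := (hpos v hv).ne'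
    field_simp
    ring
  · apply ContinuousOn.intervalIntegrable
    apply ContinuousOn.div (by fun_prop) (by fun_prop)
    intro v hv
    exact (hpos v hv).ne'

lemma depth_final {a K : ℝ} (ha2 : a < 0) (hK : 0 < K) (hKa : K ≤ -a) :
    -a^2/(2-a) ≤ a * (1 - Real.log (1+K)/K) := by
  have h2K : (0:ℝ) < 2 + K := by linarith
  have h2a : (0:ℝ) < 2 - a := by linarith
  have hlog : 2*K/(2+K) ≤ Real.log (1+K) := log_ge_pade hK.le
  rw [div_le_iff₀ h2K] at hlog
  have e1 : 2/(2+K) ≤ Real.log (1+K)/K := by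
    rw [div_le_div_iff₀ h2K hK]; linarith
  have e2 : 1 - Real.log (1+K)/K ≤ K/(2+K) := by
    have : (1:ℝ) - 2/(2+K) = K/(2+K) := by field_simp; ring
    linarith
  have e3 : a * (K/(2+K)) ≤ a * (1 - Real.log (1+K)/K) :=
    mul_le_mul_of_nonpos_left e2 ha2.le
  have e4 : -a^2/(2-a) ≤ a * (K/(2+K)) := by
    rw [div_le_iff₀ h2a, mul_comm a (K/(2+K)), mul_assoc]
    rw [div_mul_eq_mul_div, le_div_iff₀ h2K]
    nlinarith
  linarith

lemma crossing_low
    (f : ℝ → (ℝ → ℝ) → ℝ) (a : ℝ) (ha₂ : a < 0)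
    (h2 : HypH2 f a 1) (α : ℝ) (x : ℝ → ℝ) (hx : IsGlobalSol f α x)
    (hxbdd₁ : IsBoundedUnder (· ≤ ·) atTop x) (hxbdd₂ : IsBoundedUnder (· ≥ ·) atTop x)
    (m M : ℝ) (hm : m = liminf x atTop) (hM : M = limsup x atTop)
    (hm0 : m < 0) (hM0 : 0 < M) :
    -a^2/(2-a) ≤ m := by
  apply le_of_forall_pos_le_add
  intro ε hε
  set M' := M + ε with hM'def
  have hM'0 : 0 < M' := by rw [hM'def]; linarith
  have h1M' : (0:ℝ) < 1 + M' := by linarith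
  set K₂ := -(a*M'/(1+M')) with hK₂def
  have hK₂0 : 0 < K₂ := by
    rw [hK₂def, neg_pos]
    exact div_neg_of_neg_of_pos (mul_neg_of_neg_of_pos ha₂ hM'0) h1M'
  have hK₂a : K₂ ≤ -a := by
    have : a ≤ a*M'/(1+M') := by rw [le_div_iff₀ h1M']; nlinarith
    rw [hK₂def]; linarith
  have hxc : ContinuousOn x (Ici (α - 1)) := hx.1
  -- eventual upper bound
  obtain ⟨T₀, hT₀⟩ := eventually_atTop.1
    (eventually_lt_of_limsup_lt (show limsup x atTop < M' by rw [← hM, hM'def]; linarith) hxbdd₁)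
  set T₁ := max T₀ (α + 1) with hT₁def
  have hT₀T : T₀ ≤ T₁ := le_max_left _ _
  have hαT : α + 1 ≤ T₁ := le_max_right _ _
  -- a late positive time
  have hfreq_pos : ∃ᶠ t in atTop, 0 < x t :=
    frequently_lt_of_lt_limsup (hxbdd₂.isCoboundedUnder_le) (by rw [← hM]; exact hM0)
  obtain ⟨s₀, hs₀pos, hs₀ge⟩ := (hfreq_pos.and_eventually (eventually_ge_atTop (T₁+2))).exists
  -- a later low time
  have hfreq_dn : ∃ᶠ t in atTop, x t < min (m+ε) 0 :=
    frequently_lt_of_liminf_lt (hxbdd₁.isCoboundedUnder_ge)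
      (by rw [← hm]; exact lt_min (by linarith) hm0)
  obtain ⟨t₃, ht₃lt, ht₃ge⟩ := (hfreq_dn.and_eventually (eventually_ge_atTop s₀)).exists
  have ht₃0 : x t₃ < 0 := lt_of_lt_of_le ht₃lt (min_le_right _ _)
  have hs₀t₃ : s₀ ≤ t₃ := ht₃ge
  have hs₀α : α + 3 ≤ s₀ := by linarith
  -- last nonnegative time before t₃
  set S := Icc s₀ t₃ ∩ x ⁻¹' (Ici 0) with hSdef
  have hs₀S : s₀ ∈ S := ⟨⟨le_rfl, hs₀t₃⟩, le_of_lt hs₀pos⟩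
  have hSbdd : BddAbove S := ⟨t₃, fun u hu => hu.1.2⟩
  have hSclosed : IsClosed S := by
    apply ContinuousOn.preimage_isClosed_of_isClosed _ isClosed_Icc isClosed_Ici
    exact hxc.mono (fun u hu => by simp only [mem_Ici]; linarith [hu.1])
  set z := sSup S with hzdef
  have hzS : z ∈ S := hSclosed.csSup_mem ⟨s₀, hs₀S⟩ hSbdd
  have hzs₀ : s₀ ≤ z := hzS.1.1
  have hzt₃ : z ≤ t₃ := hzS.1.2
  have hxz : 0 ≤ x z := hzS.2
  have hTz : T₁ + 2 ≤ z := le_trans hs₀ge hzs₀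
  have hneg : ∀ u, z < u → u ≤ t₃ → x u < 0 := by
    intro u hu1 hu2
    by_contra hcon
    push_neg at hcon
    exact absurd (le_csSup hSbdd ⟨⟨le_trans hzs₀ hu1.le, hu2⟩, hcon⟩) (not_le.2 hu1)
  have hzt₃' : z < t₃ := lt_of_le_of_ne hzt₃ (fun h => by rw [h] at hxz; linarith)
  have hxz0 : x z = 0 := by
    refine le_antisymm ?_ hxz
    have htd : Tendsto x (𝓝[>] z) (𝓝 (x z)) := by
      apply (hxc.continuousWithinAt (show z ∈ Ici (α-1) by simp only [mem_Ici]; linarith)).mono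
      intro u hu
      simp only [mem_Ici]
      simp only [mem_Ioi] at hu
      linarith
    refine le_of_tendsto htd ?_
    filter_upwards [Ioc_mem_nhdsGT hzt₃'] with u hu
    exact (hneg u hu.1 hu.2).le
  -- yorkeM bound and lower f bound
  have hyM : ∀ u, T₁+1 ≤ u → yorkeM (seg x u) ≤ M' := by
    intro u hu
    exact yorkeM_le hM'0.le (fun s' hs' => (hT₀ s' (by linarith [hs'.1])).le)
  have hFlow : ∀ u, T₁+1 ≤ u → -K₂ ≤ f u (seg x u) := by
    intro u hu
    have h21 := h2.1 u (seg x u) (seg_InC hxc (by linarith))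
    rw [one_mul] at h21
    have hr := r_anti ha₂
      (show (-1:ℝ) < yorkeM (seg x u) by linarith [yorkeM_nonneg (seg x u)]) (hyM u hu)
    calc -K₂ = a*M'/(1+M') := by rw [hK₂def]; ring
      _ ≤ a * yorkeM (seg x u) / (1 + yorkeM (seg x u)) := hr
      _ ≤ f u (seg x u) := h21
  -- slope bound before z
  have hslope : ∀ s ∈ Icc (z-1) z, x s ≤ K₂ * (z - s) := by
    intro s hs
    have hsα : α ≤ s := by linarith [hs.1]
    obtain ⟨hI, heq⟩ := sol_diff hx hsα hs.2
    have hmono := intervalIntegral.integral_mono_on hs.2 (intervalIntegrable_const) hI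
      (fun u hu => hFlow u (by linarith [hu.1, hs.1]))
    rw [intervalIntegral.integral_const, smul_eq_mul] at hmono
    rw [hxz0] at heq
    nlinarith [hmono, heq]
  -- main integral on [z, t']
  set t' := min (z+1) t₃ with ht'def
  have hzt' : z < t' := lt_min (by linarith) hzt₃'
  have ht'le : t' ≤ z + 1 := min_le_left _ _
  have ht't₃ : t' ≤ t₃ := min_le_right _ _
  obtain ⟨hI', heq'⟩ := sol_diff hx (by linarith : α ≤ z) hzt'.le
  set rg : ℝ → ℝ := fun u => a * (K₂*(z+1-u)) / (1 + K₂*(z+1-u)) with hrgdef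
  have hrgcont : ContinuousOn rg (Icc z (z+1)) := by
    apply ContinuousOn.div (by fun_prop) (by fun_prop)
    intro u hu
    have : 0 ≤ K₂*(z+1-u) := mul_nonneg hK₂0.le (by linarith [hu.2])
    intro hcon; linarith [hcon]
  have hgpt : ∀ u ∈ Icc z t', rg u ≤ f u (seg x u) := by
    intro u hu
    have hg0 : 0 ≤ K₂*(z+1-u) := mul_nonneg hK₂0.le (by linarith [hu.2, ht'le])
    have hyMg : yorkeM (seg x u) ≤ K₂*(z+1-u) := by
      apply yorkeM_le hg0
      intro s' hs'
      rcases le_or_gt s' z with hsz | hsz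
      · calc x s' ≤ K₂ * (z - s') := hslope s' ⟨by linarith [hs'.1, hu.1], hsz⟩
          _ ≤ K₂*(z+1-u) := mul_le_mul_of_nonneg_left (by linarith [hs'.1]) hK₂0.le
      · exact le_trans (hneg s' hsz (by linarith [hs'.2, hu.2, ht't₃])).le hg0
    have h21 := h2.1 u (seg x u) (seg_InC hxc (by linarith [hu.1]))
    rw [one_mul] at h21
    exact le_trans (r_anti ha₂ (by linarith [yorkeM_nonneg (seg x u)]) hyMg) h21
  have hint1 : (∫ u in z..t', rg u) ≤ ∫ u in z..t', f u (seg x u) := by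
    apply intervalIntegral.integral_mono_on hzt'.le _ hI' hgpt
    exact (hrgcont.mono (by rw [uIcc_of_le hzt'.le]; exact Icc_subset_Icc le_rfl ht'le)).intervalIntegrable
  have hrgII : ∀ c d : ℝ, c ∈ Icc z (z+1) → d ∈ Icc z (z+1) → IntervalIntegrable rg volume c d := by
    intro c d hc hd
    exact (hrgcont.mono (uIcc_subset_Icc hc hd)).intervalIntegrable
  have hzmem : z ∈ Icc z (z+1) := ⟨le_rfl, by linarith⟩
  have hz1mem : z+1 ∈ Icc z (z+1) := ⟨by linarith, le_rfl⟩
  have ht'mem : t' ∈ Icc z (z+1) := ⟨hzt'.le, ht'le⟩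
  have hint2 : (∫ u in z..(z+1), rg u) ≤ ∫ u in z..t', rg u := by
    have hadd := intervalIntegral.integral_add_adjacent_intervals
      (hrgII z t' hzmem ht'mem) (hrgII t' (z+1) ht'mem hz1mem)
    have hnp : (∫ u in t'..(z+1), rg u) ≤ 0 := by
      have h0 : (∫ u in t'..(z+1), (0:ℝ)) = 0 := by simp
      rw [← h0]
      apply intervalIntegral.integral_mono_on ht'le (hrgII t' (z+1) ht'mem hz1mem)
        intervalIntegrable_const
      intro u hu
      apply div_nonpos_of_nonpos_of_nonneg
      · apply mul_nonpos_of_nonpos_of_nonneg ha₂.le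
        exact mul_nonneg hK₂0.le (by linarith [hu.2])
      · have : 0 ≤ K₂*(z+1-u) := mul_nonneg hK₂0.le (by linarith [hu.2])
        linarith
    linarith
  have hval : (∫ u in z..(z+1), rg u) = a * (1 - Real.log (1+K₂)/K₂) := by
    have hcomp := intervalIntegral.integral_comp_add_right (a := (0:ℝ)) (b := 1) rg z
    rw [zero_add] at hcomp
    have hc1 : (∫ v in (0:ℝ)..1, rg (v + z)) = ∫ v in (0:ℝ)..1, a * (K₂*(1-v)) / (1 + K₂*(1-v)) := by
      apply intervalIntegral.integral_congr
      intro v _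
      rw [hrgdef]
      norm_num
      rw [show z + 1 - (v + z) = 1 - v by ring]
    rw [show z + 1 = 1 + z by ring, ← hcomp, hc1]
    exact integral_r_affine hK₂0
  -- tail estimate
  have htail : x t' ≤ x t₃ := by
    rcases eq_or_lt_of_le ht't₃ with heqc | hltc
    · rw [heqc]
    · have hz1t₃ : z + 1 ≤ t₃ := by
        by_contra hcon
        push_neg at hcon
        have : t' = t₃ := min_eq_right (by linarith)
        rw [this] at hltc; exact lt_irrefl _ hltc
      have ht'z1 : t' = z + 1 := min_eq_left hz1t₃
      obtain ⟨hI₂, heq₂⟩ := sol_diff hx (by linarith : α ≤ t') hltc.le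
      have hnn : 0 ≤ ∫ u in t'..t₃, f u (seg x u) := by
        apply intervalIntegral.integral_nonneg hltc.le
        intro u hu
        have hyM0 : yorkeM (seg x u) = 0 := by
          refine le_antisymm (yorkeM_le le_rfl (fun s' hs' => ?_)) (yorkeM_nonneg _)
          rcases eq_or_lt_of_le (show z ≤ s' by rw [ht'z1] at hu; linarith [hs'.1, hu.1]) with h | h
          · rw [← h, hxz0]
          · exact (hneg s' h (by linarith [hs'.2, hu.2])).le
        have h21 := h2.1 u (seg x u) (seg_InC hxc (by rw [ht'z1] at hu; linarith [hu.1]))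
        rw [one_mul, hyM0] at h21
        simpa using h21
      linarith [heq₂]
  -- conclusion
  have hxt' : a * (1 - Real.log (1+K₂)/K₂) ≤ x t' := by
    rw [heq', hxz0]
    linarith [hint1, hint2, hval]
  have hdep := depth_final ha₂ hK₂0 hK₂a
  have : -a^2/(2-a) ≤ x t₃ := by linarith
  have := lt_of_le_of_lt this ht₃lt
  linarith [min_le_left (m+ε) 0]

set_option maxHeartbeats 1000000 in
lemma crossing_up
    (f : ℝ → (ℝ → ℝ) → ℝ) (a : ℝ) (ha₂ : a < 0)
    (h2 : HypH2 f a 1) (α : ℝ) (x : ℝ → ℝ) (hx : IsGlobalSol f α x)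
    (hxbdd₁ : IsBoundedUnder (· ≤ ·) atTop x) (hxbdd₂ : IsBoundedUnder (· ≥ ·) atTop x)
    (m M : ℝ) (hm : m = liminf x atTop) (hM : M = limsup x atTop)
    (hm0 : m < 0) (hM0 : 0 < M) (ε : ℝ) (hε : 0 < ε) (hε1 : -1 < m - ε) :
    M - ε ≤ ∫ v in (0:ℝ)..1,
      a * max (m-ε) (-(a*(m-ε)/(1+(m-ε)))*(1-v)) / (1 + max (m-ε) (-(a*(m-ε)/(1+(m-ε)))*(1-v))) := by
  set m' := m - ε with hm'def
  have hm'0 : m' < 0 := by rw [hm'def]; linarith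
  have h1m' : (0:ℝ) < 1 + m' := by linarith
  set K := a*m'/(1+m') with hKdef
  have hK0 : 0 < K := by rw [hKdef]; exact div_pos (by nlinarith) h1m'
  have hxc : ContinuousOn x (Ici (α - 1)) := hx.1
  -- eventual lower bound
  obtain ⟨T₀, hT₀⟩ := eventually_atTop.1
    (eventually_lt_of_lt_liminf (show m' < liminf x atTop by rw [← hm]; linarith) hxbdd₂)
  set T₁ := max T₀ (α + 1) with hT₁def
  have hT₀T : T₀ ≤ T₁ := le_max_left _ _
  have hαT : α + 1 ≤ T₁ := le_max_right _ _
  -- a late negative time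
  have hfreq_neg : ∃ᶠ t in atTop, x t < m/2 :=
    frequently_lt_of_liminf_lt (hxbdd₁.isCoboundedUnder_ge) (by rw [← hm]; linarith)
  obtain ⟨s₀, hs₀neg, hs₀ge⟩ := (hfreq_neg.and_eventually (eventually_ge_atTop (T₁+2))).exists
  have hs₀0 : x s₀ < 0 := by linarith
  -- a later high time
  have hfreq_up : ∃ᶠ t in atTop, max (M-ε) 0 < x t :=
    frequently_lt_of_lt_limsup (hxbdd₂.isCoboundedUnder_le)
      (by rw [← hM]; exact max_lt (by linarith) hM0)
  obtain ⟨t₂, ht₂gt, ht₂ge⟩ := (hfreq_up.and_eventually (eventually_ge_atTop s₀)).exists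
  have ht₂0 : 0 < x t₂ := lt_of_le_of_lt (le_max_right _ _) ht₂gt
  have hs₀t₂ : s₀ ≤ t₂ := ht₂ge
  have hs₀α : α + 3 ≤ s₀ := by linarith
  -- last nonpositive time before t₂
  set S := Icc s₀ t₂ ∩ x ⁻¹' (Iic 0) with hSdef
  have hs₀S : s₀ ∈ S := ⟨⟨le_rfl, hs₀t₂⟩, hs₀0.le⟩
  have hSbdd : BddAbove S := ⟨t₂, fun u hu => hu.1.2⟩
  have hSclosed : IsClosed S := by
    apply ContinuousOn.preimage_isClosed_of_isClosed _ isClosed_Icc isClosed_Iic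
    exact hxc.mono (fun u hu => by simp only [mem_Ici]; linarith [hu.1])
  set z := sSup S with hzdef
  have hzS : z ∈ S := hSclosed.csSup_mem ⟨s₀, hs₀S⟩ hSbdd
  have hzs₀ : s₀ ≤ z := hzS.1.1
  have hzt₂ : z ≤ t₂ := hzS.1.2
  have hxzle : x z ≤ 0 := hzS.2
  have hTz : T₁ + 2 ≤ z := le_trans hs₀ge hzs₀
  have hpos : ∀ u, z < u → u ≤ t₂ → 0 < x u := by
    intro u hu1 hu2
    by_contra hcon
    push_neg at hcon
    exact absurd (le_csSup hSbdd ⟨⟨le_trans hzs₀ hu1.le, hu2⟩, hcon⟩) (not_le.2 hu1)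
  have hzt₂' : z < t₂ := lt_of_le_of_ne hzt₂ (fun h => by rw [h] at hxzle; linarith)
  have hxz0 : x z = 0 := by
    refine le_antisymm hxzle ?_
    have htd : Tendsto x (𝓝[>] z) (𝓝 (x z)) := by
      apply (hxc.continuousWithinAt (show z ∈ Ici (α-1) by simp only [mem_Ici]; linarith)).mono
      intro u hu
      simp only [mem_Ici]
      simp only [mem_Ioi] at hu
      linarith
    refine ge_of_tendsto htd ?_
    filter_upwards [Ioc_mem_nhdsGT hzt₂'] with u hu
    exact (hpos u hu.1 hu.2).le
  -- premise for H2.2 and the bound -yorkeM(-x_u) ≥ m'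
  have hprem : ∀ u, T₁+1 ≤ u → ∀ s' ∈ Icc (-1:ℝ) 0, (-1:ℝ) < 1 * (seg x u) s' := by
    intro u hu s' hs'
    have := hT₀ (u + s') (by linarith [hs'.1])
    simp only [seg, one_mul]
    linarith
  have hyMneg : ∀ u, T₁+1 ≤ u → m' ≤ -yorkeM (fun s => -(seg x u) s) := by
    intro u hu
    exact yorkeM_neg_le hm'0.le (fun s' hs' => (hT₀ s' (by linarith [hs'.1])).le)
  have hFup : ∀ u, T₁+1 ≤ u → f u (seg x u) ≤ K := by
    intro u hu
    have h22 := h2.2 u (seg x u) (seg_InC hxc (by linarith)) (hprem u hu)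
    rw [one_mul] at h22
    have hr := r_anti ha₂ hε1 (hyMneg u hu)
    calc f u (seg x u) ≤ _ := h22
      _ ≤ a * m' / (1 + m') := hr
      _ = K := by rw [hKdef]
  -- slope bound before z
  have hslope : ∀ s ∈ Icc (z-1) z, -(K * (z - s)) ≤ x s := by
    intro s hs
    have hsα : α ≤ s := by linarith [hs.1]
    obtain ⟨hI, heq⟩ := sol_diff hx hsα hs.2
    have hmono := intervalIntegral.integral_mono_on hs.2 hI (intervalIntegrable_const)
      (fun u hu => hFup u (by linarith [hu.1, hs.1]))
    rw [intervalIntegral.integral_const, smul_eq_mul] at hmono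
    rw [hxz0] at heq
    nlinarith [hmono, heq]
  -- main integral on [z, t']
  set t' := min (z+1) t₂ with ht'def
  have hzt' : z < t' := lt_min (by linarith) hzt₂'
  have ht'le : t' ≤ z + 1 := min_le_left _ _
  have ht't₂ : t' ≤ t₂ := min_le_right _ _
  obtain ⟨hI', heq'⟩ := sol_diff hx (by linarith : α ≤ z) hzt'.le
  set hfun : ℝ → ℝ := fun u => max m' (-K*(z+1-u)) with hfundef
  set rh : ℝ → ℝ := fun u => a * hfun u / (1 + hfun u) with hrhdef
  have hfm : ∀ u, m' ≤ hfun u := fun u => le_max_left _ _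
  have hf1 : ∀ u, (0:ℝ) < 1 + hfun u := fun u => by linarith [hfm u]
  have hrhcont : Continuous rh := by
    apply Continuous.div (by fun_prop) (by fun_prop)
    exact fun u => (hf1 u).ne'
  have hfle : ∀ u, u ≤ z+1 → hfun u ≤ 0 := by
    intro u hu
    apply max_le hm'0.le
    nlinarith
  have hgpt : ∀ u ∈ Icc z t', f u (seg x u) ≤ rh u := by
    intro u hu
    have hu1 : T₁ + 1 ≤ u := by linarith [hu.1]
    have h22 := h2.2 u (seg x u) (seg_InC hxc (by linarith)) (hprem u hu1)
    rw [one_mul] at h22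
    have hfu0 : hfun u ≤ 0 := hfle u (by linarith [hu.2, ht'le])
    have hc : hfun u ≤ -yorkeM (fun s => -(seg x u) s) := by
      apply yorkeM_neg_le hfu0
      intro s' hs'
      rcases le_or_gt s' z with hsz | hsz
      · apply max_le
        · have := hT₀ s' (by linarith [hs'.1, hu.1])
          linarith
        · have h1 := hslope s' ⟨by linarith [hs'.1, hu.1], hsz⟩
          have h2' : K * (z - s') ≤ K * (z+1-u) := 
            mul_le_mul_of_nonneg_left (by linarith [hs'.1]) hK0.le
          nlinarith
      · exact le_trans hfu0 (hpos s' hsz (by linarith [hs'.2, hu.2, ht't₂])).le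
    exact le_trans h22 (r_anti ha₂ (by linarith [hfm u]) hc)
  have hint1 : (∫ u in z..t', f u (seg x u)) ≤ ∫ u in z..t', rh u := by
    exact intervalIntegral.integral_mono_on hzt'.le hI'
      (hrhcont.intervalIntegrable (μ := volume) z t') hgpt
  have hint2 : (∫ u in z..t', rh u) ≤ ∫ u in z..(z+1), rh u := by
    have hadd := intervalIntegral.integral_add_adjacent_intervals
      (hrhcont.intervalIntegrable (μ := volume) z t')
      (hrhcont.intervalIntegrable (μ := volume) t' (z+1))
    have hnn : 0 ≤ ∫ u in t'..(z+1), rh u := by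
      apply intervalIntegral.integral_nonneg ht'le
      intro u hu
      have h1 := hfle u hu.2
      have h2' := hf1 u
      apply div_nonneg _ h2'.le
      nlinarith
    linarith
  have hshift : (∫ u in z..(z+1), rh u) = ∫ v in (0:ℝ)..1,
      a * max m' (-K*(1-v)) / (1 + max m' (-K*(1-v))) := by
    have hcomp := intervalIntegral.integral_comp_add_right (a := (0:ℝ)) (b := 1) rh z
    rw [zero_add] at hcomp
    rw [show z + 1 = 1 + z by ring, ← hcomp]
    apply intervalIntegral.integral_congr
    intro v _
    rw [hrhdef, hfundef]
    norm_num
    rw [show z + 1 - (v + z) = 1 - v by ring]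
  -- tail estimate
  have htail : x t₂ ≤ x t' := by
    rcases eq_or_lt_of_le ht't₂ with heqc | hltc
    · rw [heqc]
    · have hz1t₂ : z + 1 ≤ t₂ := by
        by_contra hcon
        push_neg at hcon
        have : t' = t₂ := min_eq_right (by linarith)
        rw [this] at hltc; exact lt_irrefl _ hltc
      have ht'z1 : t' = z + 1 := min_eq_left hz1t₂
      obtain ⟨hI₂, heq₂⟩ := sol_diff hx (by linarith : α ≤ t') hltc.le
      have hnp : (∫ u in t'..t₂, f u (seg x u)) ≤ 0 := by
        have h0 : (∫ u in t'..t₂, (0:ℝ)) = 0 := by simp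
        rw [← h0]
        apply intervalIntegral.integral_mono_on hltc.le hI₂ intervalIntegrable_const
        intro u hu
        have hu1 : T₁ + 1 ≤ u := by rw [ht'z1] at hu; linarith [hu.1]
        have hy0 : -yorkeM (fun s => -(seg x u) s) = 0 := by
          refine le_antisymm ?_ ?_
          · simp only [neg_nonpos]
            exact yorkeM_nonneg _
          · apply yorkeM_neg_le le_rfl
            intro s' hs'
            rcases eq_or_lt_of_le (show z ≤ s' by rw [ht'z1] at hu; linarith [hs'.1, hu.1]) with h | h
            · rw [← h, hxz0]
            · exact (hpos s' h (by linarith [hs'.2, hu.2])).le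
        have h22 := h2.2 u (seg x u) (seg_InC hxc (by linarith)) (hprem u hu1)
        rw [one_mul, hy0] at h22
        simpa using h22
      linarith [heq₂]
  -- conclusion
  have hfin : x t' ≤ ∫ v in (0:ℝ)..1,
      a * max m' (-K*(1-v)) / (1 + max m' (-K*(1-v))) := by
    rw [heq', hxz0, ← hshift]
    linarith [hint1, hint2]
  have := le_max_left (M-ε) 0
  linarith [ht₂gt, htail, hfin]

/-- coarse bound: J(m') ≤ r(m') -/
lemma J_le_K {a m' : ℝ} (ha : a < 0) (hm1 : -1 < m') (hm0 : m' < 0) :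
    (∫ v in (0:ℝ)..1, a * max m' (-(a*m'/(1+m'))*(1-v)) / (1 + max m' (-(a*m'/(1+m'))*(1-v))))
      ≤ a*m'/(1+m') := by
  set K := a*m'/(1+m') with hKdef
  have h1m : (0:ℝ) < 1 + m' := by linarith
  have hcont : Continuous (fun v : ℝ => a * max m' (-K*(1-v)) / (1 + max m' (-K*(1-v)))) := by
    apply Continuous.div (by fun_prop) (by fun_prop)
    intro v
    have h := le_max_left m' (-K*(1-v))
    have : (0:ℝ) < 1 + max m' (-K*(1-v)) := by linarith
    exact this.ne'
  calc (∫ v in (0:ℝ)..1, a * max m' (-K*(1-v)) / (1 + max m' (-K*(1-v))))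
      ≤ ∫ _v in (0:ℝ)..1, a*m'/(1+m') := by
        apply intervalIntegral.integral_mono_on (by norm_num)
          (hcont.intervalIntegrable _ _) intervalIntegrable_const
        intro v _
        exact r_anti ha hm1 (le_max_left _ _)
    _ = a*m'/(1+m') := by simp

/-- refined bound: J(m') ≤ Ψ(m') for a ≤ -1 -/
lemma J_le_psi {a m' : ℝ} (ha5 : a ≤ -1) (hm1 : -1 < m') (hm0 : m' < 0) :
    (∫ v in (0:ℝ)..1, a * max m' (-(a*m'/(1+m'))*(1-v)) / (1 + max m' (-(a*m'/(1+m'))*(1-v))))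
      ≤ a*m' + m'*(1+m')/2 - a*m'^2 - (2/3)*m'^2*(1+m') + a*m'^3/(1+m') + (3/4)*m'^3 := by
  have ha : a < 0 := by linarith
  set K := a*m'/(1+m') with hKdef
  have h1m : (0:ℝ) < 1 + m' := by linarith
  have hK0 : 0 < K := by
    rw [hKdef]
    exact div_pos (by nlinarith) h1m
  have hmK : -m' ≤ K := by
    rw [hKdef, le_div_iff₀ h1m]
    nlinarith
  set v₀ : ℝ := 1 + m'/K with hv₀def
  have hv₀0 : 0 ≤ v₀ := by
    rw [hv₀def]
    have : -1 ≤ m'/K := by rw [le_div_iff₀ hK0]; nlinarith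
    linarith
  have hv₀1 : v₀ ≤ 1 := by
    rw [hv₀def]
    have : m'/K ≤ 0 := div_nonpos_of_nonpos_of_nonneg hm0.le hK0.le
    linarith
  have hKv0 : K * (1 - v₀) = -m' := by
    rw [hv₀def]; field_simp; ring
  set g : ℝ → ℝ := fun v => max m' (-K*(1-v)) with hg
  set P : ℝ → ℝ := fun v => a * (g v - (g v)^2) + a * (g v)^3/(1+m') with hP
  have hgm : ∀ v, m' ≤ g v := fun v => le_max_left _ _
  have hg1 : ∀ v, (0:ℝ) < 1 + g v := fun v => by linarith [hgm v]
  have hcont : Continuous (fun v : ℝ => a * g v / (1 + g v)) := by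
    apply Continuous.div (by fun_prop) (by fun_prop)
    exact fun v => (hg1 v).ne'
  have hPcont : Continuous P := by
    apply Continuous.add (by fun_prop)
    exact (Continuous.div_const (by fun_prop) _)
  have hgle : ∀ v ∈ Icc (0:ℝ) 1, g v ≤ 0 := by
    intro v hv
    apply max_le hm0.le
    nlinarith [hv.1, hv.2, hK0]
  -- step 1: pointwise bound
  have step1 : (∫ v in (0:ℝ)..1, a * g v / (1 + g v)) ≤ ∫ v in (0:ℝ)..1, P v := by
    apply intervalIntegral.integral_mono_on (by norm_num)
      (hcont.intervalIntegrable _ _) (hPcont.intervalIntegrable _ _)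
    intro v hv
    have h0 := hgm v
    have h1 := hg1 v
    have h2 := hgle v hv
    have hid : a * g v / (1 + g v) = a * (g v - (g v)^2) + a * (g v)^3/(1 + g v) := by
      field_simp; ring
    rw [hid, hP]
    have h3 : a * (g v)^3/(1 + g v) ≤ a * (g v)^3/(1 + m') := by
      apply div_le_div_of_nonneg_left _ h1m (by linarith)
      nlinarith [Odd.pow_nonpos (by decide : Odd 3) h2]
    linarith
  -- step 2: split
  have hsplit : (∫ v in (0:ℝ)..v₀, P v) + (∫ v in v₀..1, P v) = ∫ v in (0:ℝ)..1, P v :=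
    intervalIntegral.integral_add_adjacent_intervals
      (hPcont.intervalIntegrable _ _) (hPcont.intervalIntegrable _ _)
  -- step 3: constant piece
  have hC1 : (∫ v in (0:ℝ)..v₀, P v)
      = v₀ * (a * (m' - m'^2) + a * m'^3/(1+m')) := by
    rw [show (∫ v in (0:ℝ)..v₀, P v)
        = ∫ _v in (0:ℝ)..v₀, (a * (m' - m'^2) + a * m'^3/(1+m')) from ?_]
    · simp; ring
    · apply intervalIntegral.integral_congr
      intro v hv
      rw [uIcc_of_le hv₀0] at hv
      have hgv : g v = m' := by
        rw [hg]
        apply max_eq_left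
        have : K * (1 - v) ≥ K * (1 - v₀) := by
          apply mul_le_mul_of_nonneg_left _ hK0.le
          linarith [hv.2]
        rw [hKv0] at this
        linarith
      simp only [hP, hgv]
  -- step 4: FTC piece
  set A : ℝ → ℝ := fun v => (a/(2*K)) * (K*(1-v))^2 + (a/(3*K)) * (K*(1-v))^3
      + (a/(4*K*(1+m'))) * (K*(1-v))^4 with hA
  have hftc : (∫ v in v₀..1, P v) = A 1 - A v₀ := by
    rw [show (∫ v in v₀..1, P v) = ∫ v in v₀..1,
        (a * ((-K*(1-v)) - (-K*(1-v))^2) + a * (-K*(1-v))^3/(1+m')) from ?_]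
    · apply intervalIntegral.integral_eq_sub_of_hasDerivAt
      · intro v _
        have h1 : HasDerivAt (fun s : ℝ => 1 - s) (-1) v := (hasDerivAt_id v).const_sub 1
        have h2 : HasDerivAt (fun s : ℝ => K * (1 - s)) (K * (-1)) v := h1.const_mul K
        have hp2 := (h2.pow 2).const_mul (a/(2*K))
        have hp3 := (h2.pow 3).const_mul (a/(3*K))
        have hp4 := (h2.pow 4).const_mul (a/(4*K*(1+m')))
        have := (hp2.add hp3).add hp4
        convert this using 1
        · funext y; simp only [hA, Pi.add_apply, Pi.pow_apply]
        norm_num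
        field_simp
        ring
      · apply Continuous.intervalIntegrable
        apply Continuous.add (by fun_prop)
        exact (Continuous.div_const (by fun_prop) _)
    · apply intervalIntegral.integral_congr
      intro v hv
      rw [uIcc_of_le hv₀1] at hv
      have hgv : g v = -K*(1-v) := by
        rw [hg]
        apply max_eq_right
        have : K * (1 - v) ≤ K * (1 - v₀) := by
          apply mul_le_mul_of_nonneg_left _ hK0.le
          linarith [hv.1]
        rw [hKv0] at this
        linarith
      simp only [hP, hgv]
  -- assemble
  have hA1 : A 1 = 0 := by simp [hA]
  have hAv₀ : A v₀ = (a/(2*K)) * m'^2 - (a/(3*K)) * m'^3 + (a/(4*K*(1+m'))) * m'^4 := by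
    rw [hA]
    simp only [hKv0]
    ring
  have htotal : (∫ v in (0:ℝ)..1, P v)
      = a*m' + m'*(1+m')/2 - a*m'^2 - (2/3)*m'^2*(1+m') + a*m'^3/(1+m') + (3/4)*m'^3 := by
    rw [← hsplit, hC1, hftc, hA1, hAv₀, hv₀def, hKdef]
    have hm'ne : m' ≠ 0 := hm0.ne
    have hane : a ≠ 0 := ha.ne
    field_simp
    ring
  calc (∫ v in (0:ℝ)..1, a * g v / (1 + g v)) ≤ ∫ v in (0:ℝ)..1, P v := step1
    _ = _ := htotal

set_option maxHeartbeats 2000000 in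
/-- Lemma 2.8: under (H1)-(H3) with b = 1 and a ∈ [-3/2, 0), for a solution with
m = liminf x < 0 < M = limsup x one has M ≤ r(m); moreover M < R(m) when
a ∈ [-3/2, -5/4], where R(x) = (A'(0))²x/(A'(0) - (A''(0)/2)x) with
A'(0) = a + 1/2, A''(0) = -(2a + 1/3). -/
theorem limsup_upper_bounds
    (f : ℝ → (ℝ → ℝ) → ℝ) (θ : ℝ → ℝ) (a : ℝ)
    (ha₁ : -(3 / 2) ≤ a) (ha₂ : a < 0)
    (h1 : HypH1 f θ) (h2 : HypH2 f a 1) (h3 : HypH3 f)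
    (r R : ℝ → ℝ) (hr : ∀ x : ℝ, r x = a * x / (1 + x))
    (c₁ c₂ : ℝ) (hc₁ : c₁ = a + 1 / 2) (hc₂ : c₂ = -(2 * a + 1 / 3))
    (hR : ∀ x : ℝ, R x = c₁ ^ 2 * x / (c₁ - (c₂ / 2) * x))
    (α : ℝ) (x : ℝ → ℝ) (hx : IsGlobalSol f α x)
    (hxbdd₁ : IsBoundedUnder (· ≤ ·) atTop x)
    (hxbdd₂ : IsBoundedUnder (· ≥ ·) atTop x)
    (m M : ℝ) (hm : m = liminf x atTop) (hM : M = limsup x atTop)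
    (hm0 : m < 0) (hM0 : 0 < M) :
    M ≤ r m ∧ (a ≤ -(5 / 4) → M < R m) := by
  have hml : -a^2/(2-a) ≤ m :=
    crossing_low f a ha₂ h2 α x hx hxbdd₁ hxbdd₂ m M hm hM hm0 hM0
  have h2a : (0:ℝ) < 2 - a := by linarith
  have hm1 : -1 < m := by
    have h := hml
    rw [div_le_iff₀ h2a] at h
    nlinarith
  have h1m : (0:ℝ) < 1 + m := by linarith
  constructor
  · -- first conjunct : M ≤ r m
    rw [hr]
    have key : ∀ ε : ℝ, 0 < ε → ε < 1 + m → M ≤ a*(m-ε)/(1+(m-ε)) + ε := by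
      intro ε hε hε1
      have h := crossing_up f a ha₂ h2 α x hx hxbdd₁ hxbdd₂ m M hm hM hm0 hM0 ε hε (by linarith)
      have h2' := J_le_K (a := a) (m' := m - ε) ha₂ (by linarith) (by linarith)
      linarith
    have hne : (1:ℝ) + (m - 0) ≠ 0 := by
      rw [sub_zero]; exact h1m.ne'
    have hcont : ContinuousAt (fun ε : ℝ => a*(m-ε)/(1+(m-ε)) + ε) 0 :=
      ContinuousAt.add (ContinuousAt.div (by fun_prop) (by fun_prop) hne) continuousAt_id
    have htend : Tendsto (fun ε : ℝ => a*(m-ε)/(1+(m-ε)) + ε) (𝓝[>] (0:ℝ)) (𝓝 (a*m/(1+m))) := by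
      have h0 : a*(m-(0:ℝ))/(1+(m-0)) + 0 = a*m/(1+m) := by norm_num
      rw [← h0]
      exact hcont.tendsto.mono_left nhdsWithin_le_nhds
    refine ge_of_tendsto htend ?_
    filter_upwards [Ioo_mem_nhdsGT (show (0:ℝ) < 1+m by linarith)] with ε hε
    exact key ε hε.1 hε.2
  · -- second conjunct
    intro ha5
    have key : ∀ ε : ℝ, 0 < ε → ε < 1 + m →
        M ≤ (a*(m-ε) + (m-ε)*(1+(m-ε))/2 - a*(m-ε)^2 - (2/3)*(m-ε)^2*(1+(m-ε))
          + (3/4)*(m-ε)^3) + a*(m-ε)^3/(1+(m-ε)) + ε := by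
      intro ε hε hε1
      have h := crossing_up f a ha₂ h2 α x hx hxbdd₁ hxbdd₂ m M hm hM hm0 hM0 ε hε (by linarith)
      have h2' := J_le_psi (a := a) (m' := m - ε) (by linarith) (by linarith) (by linarith)
      linarith
    have hne : (1:ℝ) + (m - 0) ≠ 0 := by
      rw [sub_zero]; exact h1m.ne'
    have hcont : ContinuousAt (fun ε : ℝ => (a*(m-ε) + (m-ε)*(1+(m-ε))/2 - a*(m-ε)^2
        - (2/3)*(m-ε)^2*(1+(m-ε)) + (3/4)*(m-ε)^3) + a*(m-ε)^3/(1+(m-ε)) + ε) 0 :=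
      ContinuousAt.add (ContinuousAt.add (by fun_prop)
        (ContinuousAt.div (by fun_prop) (by fun_prop) hne)) continuousAt_id
    have hMψ : M ≤ (a*m + m*(1+m)/2 - a*m^2 - (2/3)*m^2*(1+m) + (3/4)*m^3)
        + a*m^3/(1+m) := by
      have htend : Tendsto (fun ε : ℝ => (a*(m-ε) + (m-ε)*(1+(m-ε))/2 - a*(m-ε)^2
          - (2/3)*(m-ε)^2*(1+(m-ε)) + (3/4)*(m-ε)^3) + a*(m-ε)^3/(1+(m-ε)) + ε)
          (𝓝[>] (0:ℝ))
          (𝓝 ((a*m + m*(1+m)/2 - a*m^2 - (2/3)*m^2*(1+m) + (3/4)*m^3) + a*m^3/(1+m))) := by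
        have h0 : (a*(m-(0:ℝ)) + (m-0)*(1+(m-0))/2 - a*(m-0)^2
            - (2/3)*(m-0)^2*(1+(m-0)) + (3/4)*(m-0)^3) + a*(m-0)^3/(1+(m-0)) + 0
            = (a*m + m*(1+m)/2 - a*m^2 - (2/3)*m^2*(1+m) + (3/4)*m^3) + a*m^3/(1+m) := by
          norm_num
        rw [← h0]
        exact hcont.tendsto.mono_left nhdsWithin_le_nhds
      refine ge_of_tendsto htend ?_
      filter_upwards [Ioo_mem_nhdsGT (show (0:ℝ) < 1+m by linarith)] with ε hε
      exact key ε hε.1 hε.2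
    rw [hR, hc₁, hc₂]
    have hml' : -a^2 ≤ m*(2-a) := by rw [div_le_iff₀ h2a] at hml; exact hml
    have h16 : a + 1/6 ≤ 0 := by linarith
    have hprod := mul_le_mul_of_nonpos_left hml' h16
    have h32 : (0:ℝ) ≤ a + 3/2 := by linarith
    have h54 : (0:ℝ) ≤ -(5/4) - a := by linarith
    have hD : (a + 1/2) - (-(2*a + 1/3)/2)*m < 0 := by
      nlinarith [hprod, mul_nonneg h32 h54, h2a]
    calc M ≤ (a*m + m*(1+m)/2 - a*m^2 - (2/3)*m^2*(1+m) + (3/4)*m^3) + a*m^3/(1+m) := hMψ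
      _ < (a + 1/2)^2 * m / ((a + 1/2) - (-(2*a + 1/3)/2)*m) := by
        rw [lt_div_iff_of_neg hD]
        have hexp : ((a*m + m*(1+m)/2 - a*m^2 - (2/3)*m^2*(1+m) + (3/4)*m^3)
            + a*m^3/(1+m)) * (1+m)
            = (a*m + m*(1+m)/2 - a*m^2 - (2/3)*m^2*(1+m) + (3/4)*m^3) * (1+m) + a*m^3 := by
          field_simp
        have hW : 1/72 + a/4 + m/36 + m^2/72 + a*m^2/12 < 0 := by
          nlinarith [mul_nonneg (sq_nonneg m) (show (0:ℝ) ≤ -1/72 - a/12 by linarith)]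
        have hm3 : m^3 < 0 := Odd.pow_neg (by decide) hm0
        have hiden : ((a*m + m*(1+m)/2 - a*m^2 - (2/3)*m^2*(1+m) + (3/4)*m^3) * (1+m) + a*m^3)
              * ((a + 1/2) - (-(2*a + 1/3)/2)*m)
            - (a + 1/2)^2 * m * (1+m)
            = m^3 * (1/72 + a/4 + m/36 + m^2/72 + a*m^2/12) := by ring
        have hposQ : 0 < m^3 * (1/72 + a/4 + m/36 + m^2/72 + a*m^2/12) :=
          mul_pos_of_neg_of_neg hm3 hW
        have key2 : (a + 1/2)^2 * m * (1+m)
            < (((a*m + m*(1+m)/2 - a*m^2 - (2/3)*m^2*(1+m) + (3/4)*m^3)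
              + a*m^3/(1+m)) * ((a + 1/2) - (-(2*a + 1/3)/2)*m)) * (1+m) := by
          have hrearr : (((a*m + m*(1+m)/2 - a*m^2 - (2/3)*m^2*(1+m) + (3/4)*m^3)
              + a*m^3/(1+m)) * ((a + 1/2) - (-(2*a + 1/3)/2)*m)) * (1+m)
              = ((a*m + m*(1+m)/2 - a*m^2 - (2/3)*m^2*(1+m) + (3/4)*m^3) * (1+m) + a*m^3)
                * ((a + 1/2) - (-(2*a + 1/3)/2)*m) := by
            rw [mul_right_comm, hexp]
          rw [hrearr]
          linarith
        exact (mul_lt_mul_iff_of_pos_right h1m).mp key2
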